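/- A multigraph with maximum degree Δ ≥ 3 has at most (e(Δ-1))^n connected induced subgraphs with n+1 vertices that include a given fixed vertex. -/

import Mathlib

set_option linter.unusedSectionVars false

open Real


lemma aux_quad {t : ℝ} (ht : 0 ≤ t) : 1 + 8*t + 28*t^2 ≤ (1+t)^8 := by
  nlinarith [pow_nonneg ht 3, pow_nonneg ht 4, pow_nonneg ht 5, pow_nonneg ht 6,
    pow_nonneg ht 7, pow_nonneg ht 8]

lemma aux_exp_quad {y : ℝ} (hy : 0 ≤ y) : 1 + y + (28/64)*y^2 ≤ Real.exp y := by
  have h1 : (1 + y/8)^8 ≤ Real.exp y := by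
    have := Real.add_one_le_exp (y/8)
    calc (1 + y/8)^8 ≤ (Real.exp (y/8))^8 := by
          apply pow_le_pow_left₀ (by linarith) (by linarith)
      _ = Real.exp y := by
          rw [← Real.exp_nat_mul]; congr 1; push_cast; ring
  have h2 := aux_quad (t := y/8) (by linarith)
  nlinarith

lemma aux_key (x : ℝ) (hx : 1 ≤ x) :
    (x + 2.5) * Real.exp (x/(x+1.5)) ≤ Real.exp 1 * (x+1) := by
  have hd : (0:ℝ) < x + 1.5 := by linarith
  have he : Real.exp 1 = Real.exp (x/(x+1.5)) * Real.exp (1.5/(x+1.5)) := by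
    rw [← Real.exp_add]
    congr 1
    field_simp
  rw [he]
  have hy : (0:ℝ) ≤ 1.5/(x+1.5) := by positivity
  have h2 := aux_exp_quad hy
  have h9 : (0:ℝ) < (x+1.5)^2 := by positivity
  have hkey : (x + 2.5) ≤ (1 + 1.5/(x+1.5) + (28/64)*(1.5/(x+1.5))^2) * (x+1) := by
    rw [show (1 + 1.5/(x+1.5) + (28/64)*(1.5/(x+1.5))^2)
        = ((x+1.5)^2 + 1.5*(x+1.5) + (28/64)*1.5^2)/(x+1.5)^2 from by field_simp]
    rw [div_mul_eq_mul_div, le_div_iff₀ h9]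
    nlinarith
  calc (x + 2.5) * Real.exp (x/(x+1.5))
      ≤ ((1 + 1.5/(x+1.5) + (28/64)*(1.5/(x+1.5))^2) * (x+1)) * Real.exp (x/(x+1.5)) := by
        apply mul_le_mul_of_nonneg_right hkey (Real.exp_pos _).le
    _ ≤ (Real.exp (1.5/(x+1.5)) * (x+1)) * Real.exp (x/(x+1.5)) := by
        apply mul_le_mul_of_nonneg_right _ (Real.exp_pos _).le
        apply mul_le_mul_of_nonneg_right h2 (by linarith)
    _ = Real.exp (x/(x+1.5)) * Real.exp (1.5/(x+1.5)) * (x+1) := by ring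

lemma aux_fact (n : ℕ) : ((n:ℝ) + 1.5)^n ≤ Real.exp 1 ^ n * n.factorial := by
  induction n with
  | zero => simp
  | succ n ih =>
    push_cast
    rcases Nat.eq_zero_or_pos n with hn | hn
    · subst hn
      have := Real.exp_one_gt_d9
      norm_num [Nat.factorial]
      linarith
    · have hx : (1:ℝ) ≤ n := by exact_mod_cast hn
      have hd : (0:ℝ) < (n:ℝ) + 1.5 := by linarith
      have h1 : ((n:ℝ) + 2.5) ≤ ((n:ℝ)+1.5) * Real.exp (1/((n:ℝ)+1.5)) := by
        have h := Real.add_one_le_exp (1/((n:ℝ)+1.5))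
        have e : ((n:ℝ)+1.5) * (1/((n:ℝ)+1.5) + 1) = (n:ℝ)+2.5 := by field_simp; ring
        calc ((n:ℝ) + 2.5) = ((n:ℝ)+1.5) * (1/((n:ℝ)+1.5) + 1) := e.symm
          _ ≤ ((n:ℝ)+1.5) * Real.exp (1/((n:ℝ)+1.5)) := by
              apply mul_le_mul_of_nonneg_left h hd.le
      have h2 : ((n:ℝ) + 2.5)^n ≤ ((n:ℝ)+1.5)^n * Real.exp ((n:ℝ)/((n:ℝ)+1.5)) := by
        calc ((n:ℝ) + 2.5)^n ≤ (((n:ℝ)+1.5) * Real.exp (1/((n:ℝ)+1.5)))^n := by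
              apply pow_le_pow_left₀ (by linarith) h1
          _ = ((n:ℝ)+1.5)^n * Real.exp ((n:ℝ)/((n:ℝ)+1.5)) := by
              rw [mul_pow, ← Real.exp_nat_mul]
              congr 2
              field_simp
      have h3 := aux_key (n:ℝ) hx
      have hgoal : ((n:ℝ)+1+1.5) = ((n:ℝ)+2.5) := by ring
      rw [hgoal]
      calc ((n:ℝ)+2.5)^(n+1) = ((n:ℝ)+2.5)^n * ((n:ℝ)+2.5) := by rw [pow_succ]
        _ ≤ (((n:ℝ)+1.5)^n * Real.exp ((n:ℝ)/((n:ℝ)+1.5))) * ((n:ℝ)+2.5) := by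
            apply mul_le_mul_of_nonneg_right h2 (by linarith)
        _ = ((n:ℝ)+1.5)^n * (((n:ℝ)+2.5) * Real.exp ((n:ℝ)/((n:ℝ)+1.5))) := by ring
        _ ≤ ((n:ℝ)+1.5)^n * (Real.exp 1 * ((n:ℝ)+1)) := by
            apply mul_le_mul_of_nonneg_left h3 (by positivity)
        _ ≤ (Real.exp 1 ^ n * n.factorial) * (Real.exp 1 * ((n:ℝ)+1)) := by
            apply mul_le_mul_of_nonneg_right ih (by positivity)
        _ = Real.exp 1 ^ (n+1) * (n+1).factorial := by
            rw [Nat.factorial_succ, pow_succ]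
            push_cast
            ring

lemma aux_choose (d n : ℕ) (hd : 2 ≤ d) :
    (((d+1) + d*n).choose n : ℝ) ≤ (Real.exp 1 * d)^n := by
  have hdr : (2:ℝ) ≤ d := by exact_mod_cast hd
  have h1 : (((d+1) + d*n).choose n : ℝ) ≤ (((d+1) + d*n : ℕ) : ℝ)^n / n.factorial :=
    Nat.choose_le_pow_div n _
  have h2 : (((d+1) + d*n : ℕ) : ℝ) ≤ ((n:ℝ) + 1.5) * d := by
    push_cast
    nlinarith
  have h3 : (((d+1) + d*n : ℕ) : ℝ)^n ≤ (((n:ℝ) + 1.5) * d)^n :=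
    pow_le_pow_left₀ (by positivity) h2 n
  have h4 := aux_fact n
  have hfac : (0:ℝ) < n.factorial := by exact_mod_cast n.factorial_pos
  calc (((d+1) + d*n).choose n : ℝ) ≤ (((d+1) + d*n : ℕ) : ℝ)^n / n.factorial := h1
    _ ≤ (((n:ℝ) + 1.5) * d)^n / n.factorial := by gcongr
    _ = ((n:ℝ)+1.5)^n * (d:ℝ)^n / n.factorial := by rw [mul_pow]
    _ ≤ (Real.exp 1 ^ n * n.factorial) * (d:ℝ)^n / n.factorial := by
        gcongr
    _ = (Real.exp 1 * d)^n := by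
        rw [mul_pow]
        field_simp


section Explore
variable {V : Type*} [Fintype V] [DecidableEq V] (G : SimpleGraph V) [DecidableRel G.Adj]

noncomputable def slotsE (w u : V) : List (V × V) :=
  (((G.neighborFinset w).erase u).toList).map (fun x => (w, x))

noncomputable def encodeE (S : Finset V) : ℕ → List (V × V) → Finset V → List Bool × Finset V
  | 0, _, vis => ([], vis)
  | _+1, [], vis => ([], vis)
  | f+1, (u,w) :: stk, vis =>
    if w ∈ S ∧ w ∉ vis then
      let p := encodeE S f (slotsE G w u ++ stk) (insert w vis)
      (true :: p.1, p.2)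
    else
      let p := encodeE S f stk vis
      (false :: p.1, p.2)

noncomputable def runE : List Bool → List (V × V) → Finset V → Finset V
  | _, [], vis => vis
  | [], _ :: _, vis => vis
  | b :: bs, (u,w) :: stk, vis =>
    if b then runE bs (slotsE G w u ++ stk) (insert w vis)
    else runE bs stk vis

variable {S : Finset V} {f : ℕ} {stk : List (V × V)} {vis : Finset V} {u w : V}

lemma encodeE_zero : encodeE G S 0 stk vis = ([], vis) := by cases stk <;> rfl

lemma encodeE_nil : encodeE G S (f+1) [] vis = ([], vis) := rfl

lemma encodeE_cons : encodeE G S (f+1) ((u,w) :: stk) vis =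
    if w ∈ S ∧ w ∉ vis then
      (true :: (encodeE G S f (slotsE G w u ++ stk) (insert w vis)).1,
        (encodeE G S f (slotsE G w u ++ stk) (insert w vis)).2)
    else
      (false :: (encodeE G S f stk vis).1, (encodeE G S f stk vis).2) := rfl

lemma runE_nil {bs : List Bool} : runE G bs [] vis = vis := by cases bs <;> rfl

lemma runE_cons {b : Bool} {bs : List Bool} : runE G (b :: bs) ((u,w) :: stk) vis =
    if b then runE G bs (slotsE G w u ++ stk) (insert w vis) else runE G bs stk vis := rfl

lemma slotsE_len (h : G.Adj u w) (Δ : ℕ) (hdeg : ∀ x, G.degree x ≤ Δ) :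
    (slotsE G w u).length ≤ Δ - 1 := by
  rw [slotsE, List.length_map, Finset.length_toList]
  have hu : u ∈ G.neighborFinset w := by
    rw [SimpleGraph.mem_neighborFinset]; exact h.symm
  rw [Finset.card_erase_of_mem hu]
  exact Nat.sub_le_sub_right (hdeg w) 1

lemma slotsE_adj {p : V × V} (hp : p ∈ slotsE G w u) : G.Adj p.1 p.2 := by
  rw [slotsE, List.mem_map] at hp
  obtain ⟨x, hx, rfl⟩ := hp
  have := Finset.mem_of_mem_erase (Finset.mem_toList.mp hx)
  exact (SimpleGraph.mem_neighborFinset _ _ _).mp this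

lemma slotsE_fst {p : V × V} (hp : p ∈ slotsE G w u) : p.1 = w := by
  rw [slotsE, List.mem_map] at hp
  obtain ⟨x, hx, rfl⟩ := hp
  rfl

lemma sdiff_insert_card (hc : w ∈ S ∧ w ∉ vis) :
    (S \ insert w vis).card + 1 = (S \ vis).card := by
  have heq : S \ insert w vis = (S \ vis).erase w := by
    ext x; simp only [Finset.mem_sdiff, Finset.mem_erase, Finset.mem_insert]
    tauto
  rw [heq, Finset.card_erase_of_mem (Finset.mem_sdiff.mpr hc)]
  have hpos : 0 < (S \ vis).card := Finset.card_pos.mpr ⟨w, Finset.mem_sdiff.mpr hc⟩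
  omega

lemma encodeE_len (S : Finset V) (Δ : ℕ) (hdeg : ∀ x, G.degree x ≤ Δ) :
    ∀ (f : ℕ) (stk : List (V × V)) (vis : Finset V),
    (∀ p ∈ stk, G.Adj p.1 p.2) →
    (encodeE G S f stk vis).1.length ≤ stk.length + (Δ-1) * (S \ vis).card := by
  intro f
  induction f with
  | zero => intro stk vis _; simp [encodeE_zero]
  | succ f ih =>
    intro stk vis hadj
    match stk with
    | [] => simp [encodeE_nil]
    | (u, w) :: stk =>
      rw [encodeE_cons]
      by_cases hc : w ∈ S ∧ w ∉ vis
      · rw [if_pos hc]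
        simp only [List.length_cons]
        have hadjw : G.Adj u w := hadj (u, w) List.mem_cons_self
        have h1 := ih (slotsE G w u ++ stk) (insert w vis) (by
          intro p hp
          rcases List.mem_append.mp hp with hp | hp
          · exact slotsE_adj G hp
          · exact hadj p (List.mem_cons_of_mem _ hp))
        have h2 := sdiff_insert_card hc
        have h3 : (slotsE G w u).length ≤ Δ - 1 := slotsE_len G hadjw Δ hdeg
        rw [List.length_append] at h1
        have h4 : (Δ-1) * (S \ vis).card = (Δ-1) * (S \ insert w vis).card + (Δ-1) := by
          rw [← h2, Nat.mul_add, Nat.mul_one]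
        omega
      · rw [if_neg hc]
        simp only [List.length_cons]
        have h1 := ih stk vis (fun p hp => hadj p (List.mem_cons_of_mem _ hp))
        omega

lemma encodeE_run (S : Finset V) (Δ : ℕ) (hdeg : ∀ x, G.degree x ≤ Δ) :
    ∀ (f : ℕ) (stk : List (V × V)) (vis : Finset V) (junk : List Bool),
    (∀ p ∈ stk, G.Adj p.1 p.2) →
    stk.length + (Δ-1) * (S \ vis).card < f →
    runE G ((encodeE G S f stk vis).1 ++ junk) stk vis = (encodeE G S f stk vis).2 := by
  intro f
  induction f with
  | zero => intro stk vis junk _ h; omega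
  | succ f ih =>
    intro stk vis junk hadj hfuel
    match stk with
    | [] =>
      rw [encodeE_nil]
      simp only [List.nil_append]
      exact runE_nil G
    | (u, w) :: stk =>
      rw [encodeE_cons]
      have hadjw : G.Adj u w := hadj (u, w) List.mem_cons_self
      by_cases hc : w ∈ S ∧ w ∉ vis
      · rw [if_pos hc]
        simp only [List.cons_append]
        rw [runE_cons, if_pos rfl]
        apply ih
        · intro p hp
          rcases List.mem_append.mp hp with hp | hp
          · exact slotsE_adj G hp
          · exact hadj p (List.mem_cons_of_mem _ hp)
        · have h2 := sdiff_insert_card hc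
          have h3 : (slotsE G w u).length ≤ Δ - 1 := slotsE_len G hadjw Δ hdeg
          rw [List.length_append]
          have h4 : (Δ-1) * (S \ vis).card = (Δ-1) * (S \ insert w vis).card + (Δ-1) := by
            rw [← h2, Nat.mul_add, Nat.mul_one]
          simp only [List.length_cons] at hfuel
          omega
      · rw [if_neg hc]
        simp only [List.cons_append]
        rw [runE_cons, if_neg (by simp)]
        apply ih
        · exact fun p hp => hadj p (List.mem_cons_of_mem _ hp)
        · simp only [List.length_cons] at hfuel; omega

lemma encodeE_card (S : Finset V) :
    ∀ (f : ℕ) (stk : List (V × V)) (vis : Finset V),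
    (encodeE G S f stk vis).2.card = vis.card + (encodeE G S f stk vis).1.count true := by
  intro f
  induction f with
  | zero => intro stk vis; simp [encodeE_zero]
  | succ f ih =>
    intro stk vis
    match stk with
    | [] => simp [encodeE_nil]
    | (u, w) :: stk =>
      rw [encodeE_cons]
      by_cases hc : w ∈ S ∧ w ∉ vis
      · rw [if_pos hc]
        simp only [List.count_cons]
        rw [ih]
        rw [Finset.card_insert_of_notMem hc.2]
        simp
        omega
      · rw [if_neg hc]
        simp only [List.count_cons]
        rw [ih]
        simp

lemma boundary_edge (S : Finset V) (hconn : (G.induce (S : Set V)).Connected)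
    (vis : Finset V) (hsub : vis ⊆ S) (x : V) (hx : x ∈ vis) (b : V) (hb : b ∈ S)
    (hnb : b ∉ vis) :
    ∃ a c, a ∈ vis ∧ c ∈ S ∧ c ∉ vis ∧ G.Adj a c := by
  have hxS : x ∈ S := hsub hx
  suffices h : ∀ (y z : ↥(S : Set V)) (p : (G.induce (S : Set V)).Walk y z),
      (y : V) ∈ vis → (z : V) ∉ vis → ∃ a c, a ∈ vis ∧ c ∈ S ∧ c ∉ vis ∧ G.Adj a c by
    obtain ⟨p⟩ := hconn.preconnected ⟨x, by simpa using hxS⟩ ⟨b, by simpa using hb⟩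
    exact h _ _ p hx hnb
  intro y z p
  induction p with
  | nil => intro h h'; exact absurd h h'
  | @cons y w z h p ih =>
    intro hy hz
    by_cases hw : (w : V) ∈ vis
    · exact ih hw hz
    · refine ⟨(y : V), (w : V), hy, by simpa using w.2, hw, ?_⟩
      exact h

lemma encodeE_correct (S : Finset V) (Δ : ℕ) (hdeg : ∀ x, G.degree x ≤ Δ)
    (hconn : (G.induce (S : Set V)).Connected) :
    ∀ (f : ℕ) (stk : List (V × V)) (vis : Finset V),
    (∀ p ∈ stk, G.Adj p.1 p.2) →
    (∀ p ∈ stk, p.1 ∈ vis) →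
    stk.length + (Δ-1) * (S \ vis).card < f →
    vis.Nonempty → vis ⊆ S →
    (∀ a b, a ∈ vis → b ∈ S → b ∉ vis → G.Adj a b → (a, b) ∈ stk) →
    (encodeE G S f stk vis).2 = S := by
  intro f
  induction f with
  | zero => intro stk vis _ _ h; omega
  | succ f ih =>
    intro stk vis hadj hfst hfuel hne hsub hfront
    match stk with
    | [] =>
      rw [encodeE_nil]
      apply Finset.Subset.antisymm hsub
      intro b hb
      by_contra hnb
      obtain ⟨x, hx⟩ := hne
      obtain ⟨a, c, ha, hcS, hcn, hadj'⟩ := boundary_edge G S hconn vis hsub x hx b hb hnb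
      exact absurd (hfront a c ha hcS hcn hadj') List.not_mem_nil
    | (u, w) :: stk =>
      rw [encodeE_cons]
      have hadjw : G.Adj u w := hadj (u, w) List.mem_cons_self
      have huv : u ∈ vis := hfst (u, w) List.mem_cons_self
      by_cases hc : w ∈ S ∧ w ∉ vis
      · rw [if_pos hc]
        apply ih
        · intro p hp
          rcases List.mem_append.mp hp with hp | hp
          · exact slotsE_adj G hp
          · exact hadj p (List.mem_cons_of_mem _ hp)
        · intro p hp
          rcases List.mem_append.mp hp with hp | hp
          · rw [slotsE_fst G hp]; exact Finset.mem_insert_self _ _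
          · exact Finset.mem_insert_of_mem (hfst p (List.mem_cons_of_mem _ hp))
        · have h2 := sdiff_insert_card hc
          have h3 : (slotsE G w u).length ≤ Δ - 1 := slotsE_len G hadjw Δ hdeg
          rw [List.length_append]
          have h4 : (Δ-1) * (S \ vis).card = (Δ-1) * (S \ insert w vis).card + (Δ-1) := by
            rw [← h2, Nat.mul_add, Nat.mul_one]
          simp only [List.length_cons] at hfuel
          omega
        · exact ⟨w, Finset.mem_insert_self _ _⟩
        · exact Finset.insert_subset hc.1 hsub
        · intro a b ha hb hnb hadj'
          rcases Finset.mem_insert.mp ha with rfl | ha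
          · apply List.mem_append.mpr
            left
            rw [slotsE, List.mem_map]
            refine ⟨b, ?_, rfl⟩
            rw [Finset.mem_toList, Finset.mem_erase]
            constructor
            · rintro rfl
              exact hnb (Finset.mem_insert_of_mem huv)
            · rw [SimpleGraph.mem_neighborFinset]; exact hadj'
          · apply List.mem_append.mpr
            right
            have hmem := hfront a b ha hb (fun h => hnb (Finset.mem_insert_of_mem h)) hadj'
            rcases List.mem_cons.mp hmem with heq | hmem
            · exfalso
              have hb' : b = w := congrArg Prod.snd heq
              exact hnb (hb' ▸ Finset.mem_insert_self w vis)
            · exact hmem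
      · rw [if_neg hc]
        apply ih
        · exact fun p hp => hadj p (List.mem_cons_of_mem _ hp)
        · exact fun p hp => hfst p (List.mem_cons_of_mem _ hp)
        · simp only [List.length_cons] at hfuel; omega
        · exact hne
        · exact hsub
        · intro a b ha hb hnb hadj'
          have hmem := hfront a b ha hb hnb hadj'
          rcases List.mem_cons.mp hmem with heq | hmem
          · exfalso
            have hb' : b = w := congrArg Prod.snd heq
            subst hb'
            exact hc ⟨hb, hnb⟩
          · exact hmem




lemma filter_getD_card : ∀ (l : List Bool) (L : ℕ), l.length = L →
    (Finset.univ.filter (fun i : Fin L => l.getD i.val false = true)).card = l.count true := by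
  intro l
  induction l with
  | nil =>
    intro L h
    subst h
    simp
  | cons b t ih =>
    intro L h
    subst h
    rw [Finset.card_filter]
    rw [show (b :: t).length = t.length + 1 from rfl, Fin.sum_univ_succ]
    simp only [Fin.val_zero, List.getD_cons_zero, Fin.val_succ, List.getD_cons_succ]
    rw [← Finset.card_filter, ih t.length rfl, List.count_cons]
    cases b <;> simp [add_comm]

lemma bool_list_ext {l₁ l₂ : List Bool} {L : ℕ} (h₁ : l₁.length = L) (h₂ : l₂.length = L)
    (h : ∀ i : Fin L, (l₁.getD i.val false = true) ↔ (l₂.getD i.val false = true)) :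
    l₁ = l₂ := by
  apply List.ext_getElem (h₁.trans h₂.symm)
  intro i hi1 hi2
  have hiL : i < L := h₁ ▸ hi1
  have := h ⟨i, hiL⟩
  rw [List.getD_eq_getElem _ _ hi1, List.getD_eq_getElem _ _ hi2] at this
  exact Bool.coe_iff_coe.mp this

noncomputable def initStkE (v : V) : List (V × V) :=
  (G.neighborFinset v).toList.map (fun x => (v, x))

noncomputable def bitsE (S : Finset V) (L : ℕ) (v : V) : List Bool :=
  (encodeE G S (L+1) (initStkE G v) {v}).1

noncomputable def padE (S : Finset V) (L : ℕ) (v : V) : List Bool :=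
  bitsE G S L v ++ List.replicate (L - (bitsE G S L v).length) false

lemma initStkE_adj {v : V} : ∀ p ∈ initStkE G v, G.Adj p.1 p.2 := by
  intro p hp
  rw [initStkE, List.mem_map] at hp
  obtain ⟨x, hx, rfl⟩ := hp
  exact (SimpleGraph.mem_neighborFinset _ _ _).mp (Finset.mem_toList.mp hx)

lemma initStkE_fst {v : V} : ∀ p ∈ initStkE G v, p.1 ∈ ({v} : Finset V) := by
  intro p hp
  rw [initStkE, List.mem_map] at hp
  obtain ⟨x, hx, rfl⟩ := hp
  exact Finset.mem_singleton_self v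

lemma initStkE_len {v : V} (Δ : ℕ) (hdeg : ∀ x, G.degree x ≤ Δ) :
    (initStkE G v).length ≤ Δ := by
  rw [initStkE, List.length_map, Finset.length_toList]
  exact hdeg v

lemma padE_key {v : V} {n : ℕ} (Δ : ℕ) (hΔ : 3 ≤ Δ) (hdeg : ∀ x, G.degree x ≤ Δ)
    (S : Finset V) (hcard : S.card = n + 1) (hv : v ∈ S)
    (hconn : (G.induce (S : Set V)).Connected) :
    (padE G S (Δ + (Δ-1)*n) v).length = (Δ + (Δ-1)*n) ∧
    (padE G S (Δ + (Δ-1)*n) v).count true = n ∧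
    runE G (padE G S (Δ + (Δ-1)*n) v) (initStkE G v) {v} = S := by
  set L := Δ + (Δ-1)*n with hL
  have hsdiff : (S \ {v}).card = n := by
    rw [Finset.card_sdiff_of_subset (Finset.singleton_subset_iff.mpr hv), Finset.card_singleton, hcard]
    omega
  have hlen0 := initStkE_len G (v := v) Δ hdeg
  have hfuel : (initStkE G v).length + (Δ-1) * (S \ ({v} : Finset V)).card < L + 1 := by
    rw [hsdiff, hL]
    exact Nat.lt_succ_of_le (Nat.add_le_add_right hlen0 _)
  have hblen : (bitsE G S L v).length ≤ L := by
    have h := encodeE_len G S Δ hdeg (L+1) (initStkE G v) {v} (initStkE_adj G)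
    rw [hsdiff] at h
    exact h.trans (by rw [hL]; exact Nat.add_le_add_right hlen0 _)
  have hplen : (padE G S L v).length = L := by
    rw [padE, List.length_append, List.length_replicate]
    omega
  have hcorrect : (encodeE G S (L+1) (initStkE G v) {v}).2 = S :=
    encodeE_correct G S Δ hdeg hconn (L+1) (initStkE G v) {v} (initStkE_adj G) (initStkE_fst G)
      hfuel ⟨v, Finset.mem_singleton_self v⟩ (Finset.singleton_subset_iff.mpr hv)
      (fun a b ha hb hnb hadj' => by
        rw [Finset.mem_singleton] at ha
        subst ha
        rw [initStkE, List.mem_map]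
        exact ⟨b, Finset.mem_toList.mpr ((SimpleGraph.mem_neighborFinset _ _ _).mpr hadj'), rfl⟩)
  have hcount : (bitsE G S L v).count true = n := by
    have h := encodeE_card G S (L+1) (initStkE G v) {v}
    rw [hcorrect, hcard, Finset.card_singleton] at h
    rw [bitsE]
    omega
  have hpcount : (padE G S L v).count true = n := by
    rw [padE, List.count_append, hcount, List.count_replicate]
    simp
  have hrun : runE G (padE G S L v) (initStkE G v) {v} = S := by
    have h := encodeE_run G S Δ hdeg (L+1) (initStkE G v) {v}
      (List.replicate (L - (bitsE G S L v).length) false) (initStkE_adj G) hfuel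
    rw [hcorrect] at h
    exact h
  exact ⟨hplen, hpcount, hrun⟩

noncomputable def encFinE (S : Finset V) (L : ℕ) (v : V) : Finset (Fin L) :=
  Finset.univ.filter (fun i : Fin L => (padE G S L v).getD i.val false = true)

theorem card_bound (Δ : ℕ) (hΔ : 3 ≤ Δ) (hdeg : ∀ x, G.degree x ≤ Δ) (v : V) (n : ℕ) :
    Nat.card {S : Finset V // S.card = n + 1 ∧ v ∈ S ∧ (G.induce (S : Set V)).Connected}
      ≤ (Δ + (Δ-1)*n).choose n := by
  classical
  set L := Δ + (Δ-1)*n with hL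
  have hproof : ∀ s : {S : Finset V // S.card = n + 1 ∧ v ∈ S ∧
      (G.induce (S : Set V)).Connected}, (encFinE G s.1 L v).card = n := by
    intro s
    obtain ⟨hplen, hpcount, _⟩ := padE_key G Δ hΔ hdeg s.1 s.2.1 s.2.2.1 s.2.2.2
    rw [encFinE, filter_getD_card _ L hplen, hpcount]
  have hstep := Nat.card_le_card_of_injective
    (f := fun s : {S : Finset V // S.card = n + 1 ∧ v ∈ S ∧
        (G.induce (S : Set V)).Connected} =>
      (⟨encFinE G s.1 L v, hproof s⟩ : {T : Finset (Fin L) // T.card = n}))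
    (by
      rintro ⟨S₁, h11, h12, h13⟩ ⟨S₂, h21, h22, h23⟩ hF
      obtain ⟨hplen1, _, hrun1⟩ := padE_key G Δ hΔ hdeg S₁ h11 h12 h13
      obtain ⟨hplen2, _, hrun2⟩ := padE_key G Δ hΔ hdeg S₂ h21 h22 h23
      have hval : encFinE G S₁ L v = encFinE G S₂ L v := congrArg Subtype.val hF
      have hTeq : ∀ i : Fin L, ((padE G S₁ L v).getD i.val false = true) ↔
          ((padE G S₂ L v).getD i.val false = true) := by
        intro i
        have h := Finset.ext_iff.mp hval i
        simp only [encFinE, Finset.mem_filter, Finset.mem_univ, true_and] at h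
        exact h
      have hpeq : padE G S₁ L v = padE G S₂ L v := bool_list_ext hplen1 hplen2 hTeq
      have : S₁ = S₂ := by rw [← hrun1, hpeq, hrun2]
      exact Subtype.ext this)
  calc Nat.card {S : Finset V // S.card = n + 1 ∧ v ∈ S ∧ (G.induce (S : Set V)).Connected}
      ≤ Nat.card {T : Finset (Fin L) // T.card = n} := hstep
    _ = L.choose n := by
        rw [Nat.card_eq_fintype_card, Fintype.card_finset_len, Fintype.card_fin]

end Explore

/-- A (multi-)graph with maximum degree `Δ ≥ 3` has at most `(e(Δ-1))^n` connected
induced subgraphs with `n+1` vertices that include a given fixed vertex. -/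
theorem stmt_0 {V : Type*} [Fintype V] [DecidableEq V]
    (G : SimpleGraph V) [DecidableRel G.Adj]
    (Δ : ℕ) (hΔ : 3 ≤ Δ) (hdeg : ∀ w : V, G.degree w ≤ Δ)
    (v : V) (n : ℕ) :
    (Nat.card {S : Finset V // S.card = n + 1 ∧ v ∈ S ∧
        (G.induce (S : Set V)).Connected} : ℝ)
      ≤ (Real.exp 1 * ((Δ : ℝ) - 1)) ^ n := by
  have h1 := card_bound G Δ hΔ hdeg v n
  have h2 := aux_choose (Δ-1) n (by omega)
  rw [show Δ - 1 + 1 = Δ from by omega] at h2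
  have hcast : ((Δ-1 : ℕ) : ℝ) = (Δ : ℝ) - 1 := by
    rw [Nat.cast_sub (by omega : 1 ≤ Δ), Nat.cast_one]
  rw [hcast] at h2
  calc (Nat.card {S : Finset V // S.card = n + 1 ∧ v ∈ S ∧
        (G.induce (S : Set V)).Connected} : ℝ)
      ≤ ((Δ + (Δ-1)*n).choose n : ℝ) := by exact_mod_cast h1
    _ ≤ (Real.exp 1 * ((Δ : ℝ) - 1)) ^ n := h2
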